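/- Let L be a bounded lattice equipped with a map x ↦ xᶜ that is involutive ((xᶜ)ᶜ = x), antitone (x ≤ y implies yᶜ ≤ xᶜ), and satisfies x ⊓ xᶜ = ⊥ for all x, and with a binary operation △ : L × L → L satisfying (GEQL1) x △ (y △ z) = (x △ y) △ z, (GEQL2) x △ ⊤ = xᶜ and ⊤ △ x = xᶜ, and (GEQL3) x ≤ z and y ≤ z imply x △ y ≤ z. Then the identities x △ ⊥ = x, ⊥ △ x = x, and x △ x = ⊥ hold for all x ∈ L. -/
import Mathlib

/-- In a bounded lattice with an orthocomplementation `oc` (involutive,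
antitone, `x ⊓ oc x = ⊥`) and a symmetric-difference operation `sd` satisfying
(GEQL1)–(GEQL3), one has `x ∆ ⊥ = x`, `⊥ ∆ x = x` and `x ∆ x = ⊥`. -/
theorem stmt17 {L : Type*} [Lattice L] [BoundedOrder L]
    (oc : L → L) (sd : L → L → L)
    (h_inv : ∀ x : L, oc (oc x) = x)
    (h_anti : ∀ x y : L, x ≤ y → oc y ≤ oc x)
    (h_compl : ∀ x : L, x ⊓ oc x = ⊥)
    (hGEQL1 : ∀ x y z : L, sd x (sd y z) = sd (sd x y) z)
    (hGEQL2 : ∀ x : L, sd x ⊤ = oc x ∧ sd ⊤ x = oc x)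
    (hGEQL3 : ∀ x y z : L, x ≤ z → y ≤ z → sd x y ≤ z) :
    ∀ x : L, sd x ⊥ = x ∧ sd ⊥ x = x ∧ sd x x = ⊥ := by
  have hoct : oc ⊤ = ⊥ := by
    have := h_compl ⊤; simpa using this
  have htt : sd ⊤ ⊤ = ⊥ := by rw [(hGEQL2 ⊤).1, hoct]
  intro x
  have h1 : sd x ⊥ = x := by
    rw [← htt, hGEQL1, (hGEQL2 x).1, (hGEQL2 (oc x)).1, h_inv]
  have h2 : sd ⊥ x = x := by
    rw [← htt, ← hGEQL1, (hGEQL2 x).2, (hGEQL2 (oc x)).2, h_inv]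
  refine ⟨h1, h2, ?_⟩
  -- x △ x = oc x △ oc x
  have key : sd x x = sd (oc x) (oc x) := by
    have e1 : sd x x = sd (sd ⊤ (oc x)) (sd (oc x) ⊤) := by
      rw [(hGEQL2 (oc x)).1, (hGEQL2 (oc x)).2, h_inv]
    rw [e1, ← hGEQL1, hGEQL1 (oc x), (hGEQL2 (sd (oc x) (oc x))).1,
      (hGEQL2 (oc (sd (oc x) (oc x)))).2, h_inv]
  have hx : sd x x ≤ x := hGEQL3 x x x le_rfl le_rfl
  have hx' : sd x x ≤ oc x := by
    rw [key]; exact hGEQL3 _ _ _ le_rfl le_rfl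
  have : sd x x ≤ x ⊓ oc x := le_inf hx hx'
  rw [h_compl] at this
  exact le_bot_iff.mp this
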